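/- Let G be a locally finite simple connected graph and fix a starting vertex a. For every initial rotor configuration ρ and every vertex x, liminf_{n→∞} S_n(ρ,x)/n ≥ G(a,x), where S_n(ρ,x) is the total number of visits to x by n sequential rotor walks with empty sink and G(a,x) is the Green function of simple random walk (interpreted as +∞ if G is recurrent). -/

import Mathlib

open MeasureTheory Filter ENNReal Set

namespace RotorWalk

variable {V : Type*} [DecidableEq V]

/-- One step of the rotor walk with local mechanisms `τ`:
the rotor at the current position is advanced and the walker follows it. -/
def step (τ : V → V → V) (p : V × (V → V)) : V × (V → V) :=
  (τ p.1 (p.2 p.1), Function.update p.2 p.1 (τ p.1 (p.2 p.1)))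

/-- Trajectory (position, rotor configuration) of the rotor walk started at `a`
with initial rotor configuration `ρ`. -/
def traj (τ : V → V → V) (a : V) (ρ : V → V) : ℕ → V × (V → V)
  | 0 => (a, ρ)
  | t + 1 => step τ (traj τ a ρ t)

/-- Position of the walker at time `t`. -/
def pos (τ : V → V → V) (a : V) (ρ : V → V) (t : ℕ) : V := (traj τ a ρ t).1

/-- Rotor configuration at time `t`. -/
def conf (τ : V → V → V) (a : V) (ρ : V → V) (t : ℕ) : V → V := (traj τ a ρ t).2

/-- The walk has not hit the sink `Z` up to and including time `t`. -/
def aliveAt (τ : V → V → V) (Z : Set V) (a : V) (ρ : V → V) (t : ℕ) : Prop :=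
  ∀ s ≤ t, pos τ a ρ s ∉ Z

/-- Odometer: the number of visits to `x` strictly before hitting the sink `Z`. -/
noncomputable def odometer (τ : V → V → V) (Z : Set V) (a : V) (ρ : V → V) (x : V) : ℕ∞ :=
  {t : ℕ | aliveAt τ Z a ρ t ∧ pos τ a ρ t = x}.encard

/-- Number of traversals of the directed edge `(y, x)` strictly before hitting `Z`. -/
noncomputable def edgeCount (τ : V → V → V) (Z : Set V) (a : V) (ρ : V → V) (y x : V) : ℕ∞ :=
  {t : ℕ | aliveAt τ Z a ρ t ∧ pos τ a ρ t = y ∧ pos τ a ρ (t + 1) = x}.encard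

open Classical in
/-- The final rotor configuration: the configuration at the hitting time of `Z` if the walk
hits `Z`, and otherwise the pointwise eventual value of the rotor configuration
(which exists when the walk is transient). -/
noncomputable def finalConf (τ : V → V → V) (Z : Set V) (a : V) (ρ : V → V) : V → V :=
  if ∃ t, pos τ a ρ t ∈ Z then conf τ a ρ (sInf {t | pos τ a ρ t ∈ Z})
  else fun x => if h : ∃ v, ∀ᶠ t in atTop, conf τ a ρ t x = v then h.choose else ρ x

/-- Total number of visits to `x` by `n` sequential rotor walks (rotors not reset). -/
noncomputable def Svis (τ : V → V → V) (Z : Set V) (a : V) (ρ : V → V) (n : ℕ) (x : V) : ℕ∞ :=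
  ∑ i ∈ Finset.range n, odometer τ Z a ((finalConf τ Z a)^[i] ρ) x

/-- Total number of traversals of the directed edge `(y,x)` by `n` sequential rotor walks. -/
noncomputable def Sedge (τ : V → V → V) (Z : Set V) (a : V) (ρ : V → V) (n : ℕ) (y x : V) : ℕ∞ :=
  ∑ i ∈ Finset.range n, edgeCount τ Z a ((finalConf τ Z a)^[i] ρ) y x

/-- The rotor walk is transient: every vertex is visited finitely often (before hitting `Z`). -/
def IsTransientWalk (τ : V → V → V) (Z : Set V) (a : V) (ρ : V → V) : Prop :=
  ∀ x : V, {t : ℕ | aliveAt τ Z a ρ t ∧ pos τ a ρ t = x}.Finite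

open Classical in
/-- Total number of visits to `x` by `n` sequential rotor walks with empty sink,
set to `⊤` if one of the `n` walks fails to be transient. -/
noncomputable def SvisT (τ : V → V → V) (a : V) (ρ : V → V) (n : ℕ) (x : V) : ℕ∞ :=
  if ∀ i < n, IsTransientWalk τ ∅ a ((finalConf τ ∅ a)^[i] ρ) then Svis τ ∅ a ρ n x else ⊤

/-- The local mechanisms map neighbors to neighbors and have a single orbit on each
neighborhood (off the sink). -/
def ValidMechanism (G : SimpleGraph V) (Z : Set V) (τ : V → V → V) : Prop :=
  ∀ x ∉ Z, (∀ y, G.Adj x y → G.Adj x (τ x y)) ∧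
    ∀ y, G.Adj x y → ∀ z, G.Adj x z → ∃ i : ℕ, (τ x)^[i] y = z

/-- A rotor configuration: every rotor (off the sink) points to a neighbor. -/
def ValidConfig (G : SimpleGraph V) (Z : Set V) (ρ : V → V) : Prop :=
  ∀ x ∉ Z, G.Adj x (ρ x)

/-- Time-`t` distribution of the simple random walk started at `a` and killed on `Z`. -/
noncomputable def srw (G : SimpleGraph V) [G.LocallyFinite] (Z : Set V) (a : V) :
    ℕ → V → ℝ≥0∞
  | 0 => Set.indicator {a} 1
  | t + 1 => fun x =>
      ∑' y : V, Set.indicator {y | G.Adj y x ∧ y ∉ Z}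
        (fun y => srw G Z a t y / (G.degree y : ℝ≥0∞)) y

/-- Green function: the expected number of visits to a vertex, strictly before hitting `Z`,
of the simple random walk started at `a`. -/
noncomputable def green (G : SimpleGraph V) [G.LocallyFinite] (Z : Set V) (a : V) : V → ℝ≥0∞ :=
  Set.indicator Zᶜ (fun x => ∑' t : ℕ, srw G Z a t x)

/-- The graph is transient: the Green function (with empty sink) is finite. -/
def TransientGraph (G : SimpleGraph V) [G.LocallyFinite] : Prop :=
  ∀ a x : V, green G ∅ a x < ⊤

/-- A `Z`-oriented spanning forest, encoded as a rotor configuration: off `Z` it points to a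
neighbor, on `Z` it is normalized to the identity, and every vertex eventually reaches `Z`. -/
def IsOSF (G : SimpleGraph V) (Z : Set V) (ρ : V → V) : Prop :=
  (∀ x ∉ Z, G.Adj x (ρ x)) ∧ (∀ x ∈ Z, ρ x = x) ∧ ∀ x : V, ∃ n : ℕ, ρ^[n] x ∈ Z

/-- An oriented spanning forest of an infinite graph: every vertex has out-degree one along
an edge and there is no directed cycle. -/
def IsOSFInf (G : SimpleGraph V) (ρ : V → V) : Prop :=
  (∀ x, G.Adj x (ρ x)) ∧ ∀ x : V, ∀ n > 0, ρ^[n] x ≠ x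

/-- A spanning forest of the ball of radius `R` around `a`, oriented toward the boundary
sphere (the sink), normalized to the identity outside the open ball. -/
def IsOSFBall (G : SimpleGraph V) (a : V) (R : ℕ) (ρ : V → V) : Prop :=
  (∀ x, G.dist a x < R → G.Adj x (ρ x)) ∧
  (∀ x, ¬ G.dist a x < R → ρ x = x) ∧
  ∀ x, G.dist a x < R → ∃ n : ℕ, G.dist a (ρ^[n] x) = R

instance : MeasurableSpace (V → V) := ⊤

/-- `μ` is the oriented wired uniform spanning forest measure of `G` (with respect to the
exhaustion by balls around `a`): it is a probability measure supported on oriented spanning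
forests whose finite-dimensional marginals are the limits of the uniform measures on
boundary-oriented spanning forests of the balls. -/
def IsOWUSF (G : SimpleGraph V) (a : V) (μ : Measure (V → V)) : Prop :=
  IsProbabilityMeasure μ ∧
  (∀ᵐ ρ ∂μ, IsOSFInf G ρ) ∧
  ∀ B : Finset (V × V),
    Tendsto (fun R : ℕ =>
        (({ρ : V → V | IsOSFBall G a R ρ ∧ ∀ e ∈ B, ρ e.1 = e.2}.ncard : ℝ) /
          ({ρ : V → V | IsOSFBall G a R ρ}.ncard : ℝ))) atTop
      (nhds ((μ {ρ : V → V | ∀ e ∈ B, ρ e.1 = e.2}).toReal))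

/-- Vertex-transitivity. -/
def VertexTransitive (G : SimpleGraph V) : Prop :=
  ∀ u v : V, ∃ φ : G ≃g G, φ u = v

/-- `μ` is stationary for the rotor walk (empty sink) started at `a`: almost every walk is
transient and the final rotor configuration again has law `μ`. -/
def RWStationary (τ : V → V → V) (a : V) (μ : Measure (V → V)) : Prop :=
  (∀ᵐ ρ ∂μ, IsTransientWalk τ ∅ a ρ) ∧ μ.map (finalConf τ ∅ a) = μ

section Aux
variable {V : Type*} [DecidableEq V]

private def Vis (τ : V → V → V) (a : V) (ρ : V → V) (y : V) : Set ℕ :=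
  {t | pos τ a ρ t = y}

private def nv (τ : V → V → V) (a : V) (ρ : V → V) (y : V) (t : ℕ) : ℕ :=
  ((Finset.range t).filter (fun s => pos τ a ρ s = y)).card

private lemma pos_succ (τ : V → V → V) (a : V) (ρ : V → V) (t : ℕ) :
    pos τ a ρ (t + 1) = τ (pos τ a ρ t) (conf τ a ρ t (pos τ a ρ t)) := rfl

private lemma conf_succ (τ : V → V → V) (a : V) (ρ : V → V) (t : ℕ) :
    conf τ a ρ (t + 1) =
      Function.update (conf τ a ρ t) (pos τ a ρ t)
        (τ (pos τ a ρ t) (conf τ a ρ t (pos τ a ρ t))) := rfl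

private lemma nv_succ (τ : V → V → V) (a : V) (ρ : V → V) (y : V) (t : ℕ) :
    nv τ a ρ y (t + 1) = nv τ a ρ y t + (if pos τ a ρ t = y then 1 else 0) := by
  unfold nv
  rw [Finset.range_add_one, Finset.filter_insert]
  split
  · rw [Finset.card_insert_of_notMem (by simp)]
  · simp

private lemma conf_eq_iterate (τ : V → V → V) (a : V) (ρ : V → V) (y : V) :
    ∀ t, conf τ a ρ t y = (τ y)^[nv τ a ρ y t] (ρ y) := by
  intro t
  induction t with
  | zero => simp [conf, traj, nv]
  | succ t ih =>
    rw [conf_succ, nv_succ]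
    by_cases h : pos τ a ρ t = y
    · rw [if_pos h, h, Function.update_self, ih]
      exact (Function.iterate_succ_apply' (τ y) _ (ρ y)).symm
    · rw [if_neg h, Function.update_of_ne (fun hh => h hh.symm), add_zero, ih]

private lemma aliveAt_empty (τ : V → V → V) (a : V) (ρ : V → V) (t : ℕ) :
    aliveAt τ (∅ : Set V) a ρ t := fun _ _ => Set.notMem_empty _

private lemma odometer_set_eq (τ : V → V → V) (a : V) (ρ : V → V) (x : V) :
    {t : ℕ | aliveAt τ (∅ : Set V) a ρ t ∧ pos τ a ρ t = x} = Vis τ a ρ x := by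
  ext t; simp [Vis, aliveAt_empty]

private lemma vis_finite {τ : V → V → V} {a : V} {ρ : V → V}
    (hT : IsTransientWalk τ ∅ a ρ) (y : V) : (Vis τ a ρ y).Finite := by
  have h := hT y; rwa [odometer_set_eq] at h

private noncomputable def mvis (τ : V → V → V) (a : V) (ρ : V → V) (y : V) : ℕ :=
  (Vis τ a ρ y).ncard

private lemma nv_inj {τ : V → V → V} {a : V} {ρ : V → V} {y : V} {t t' : ℕ}
    (ht : pos τ a ρ t = y) (ht' : pos τ a ρ t' = y)
    (h : nv τ a ρ y t = nv τ a ρ y t') : t = t' := by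
  by_contra hne
  wlog hlt : t < t' generalizing t t'
  · exact this ht' ht h.symm (Ne.symm hne) (by omega)
  have hsub : insert t ((Finset.range t).filter (fun s => pos τ a ρ s = y)) ⊆
      (Finset.range t').filter (fun s => pos τ a ρ s = y) := by
    intro s hs
    rcases Finset.mem_insert.1 hs with rfl | hs
    · exact Finset.mem_filter.2 ⟨Finset.mem_range.2 hlt, ht⟩
    · rcases Finset.mem_filter.1 hs with ⟨hr, hp⟩
      exact Finset.mem_filter.2 ⟨Finset.mem_range.2 (lt_trans (Finset.mem_range.1 hr) hlt), hp⟩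
  have hc := Finset.card_le_card hsub
  rw [Finset.card_insert_of_notMem (by simp)] at hc
  unfold nv at h; omega

private lemma nv_lt {τ : V → V → V} {a : V} {ρ : V → V} {y : V}
    (hT : IsTransientWalk τ ∅ a ρ) {t : ℕ} (ht : pos τ a ρ t = y) :
    nv τ a ρ y t < mvis τ a ρ y := by
  have hfin := vis_finite hT y
  have hsub : insert t ((Finset.range t).filter (fun s => pos τ a ρ s = y)) ⊆ hfin.toFinset := by
    intro s hs
    rcases Finset.mem_insert.1 hs with rfl | hs
    · simp only [Set.Finite.mem_toFinset]; exact ht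
    · rcases Finset.mem_filter.1 hs with ⟨_, hp⟩
      simp only [Set.Finite.mem_toFinset]; exact hp
  have hc := Finset.card_le_card hsub
  rw [Finset.card_insert_of_notMem (by simp)] at hc
  unfold nv mvis
  rw [Set.ncard_eq_toFinset_card _ hfin]
  omega

private lemma nv_surj {τ : V → V → V} {a : V} {ρ : V → V} {y : V}
    (hT : IsTransientWalk τ ∅ a ρ) {j : ℕ} (hj : j < mvis τ a ρ y) :
    ∃ t, pos τ a ρ t = y ∧ nv τ a ρ y t = j := by
  have hfin := vis_finite hT y
  have hcard : hfin.toFinset.card = mvis τ a ρ y := (Set.ncard_eq_toFinset_card _ hfin).symm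
  have hinj : Set.InjOn (nv τ a ρ y) hfin.toFinset := by
    intro t htF t' ht'F h
    exact nv_inj (by simpa [Set.Finite.mem_toFinset, Vis] using htF)
      (by simpa [Set.Finite.mem_toFinset, Vis] using ht'F) h
  have himg : hfin.toFinset.image (nv τ a ρ y) = Finset.range (mvis τ a ρ y) := by
    apply Finset.eq_of_subset_of_card_le
    · intro k hk
      rcases Finset.mem_image.1 hk with ⟨t, htF, rfl⟩
      exact Finset.mem_range.2 (nv_lt hT (by simpa [Set.Finite.mem_toFinset, Vis] using htF))
    · rw [Finset.card_image_of_injOn hinj, hcard, Finset.card_range]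
  have hjm : j ∈ hfin.toFinset.image (nv τ a ρ y) := by
    rw [himg]; exact Finset.mem_range.2 hj
  rcases Finset.mem_image.1 hjm with ⟨t, htF, hnv⟩
  exact ⟨t, by simpa [Set.Finite.mem_toFinset, Vis] using htF, hnv⟩

private lemma nv_eventually {τ : V → V → V} {a : V} {ρ : V → V}
    (hT : IsTransientWalk τ ∅ a ρ) (y : V) :
    ∃ N, ∀ t ≥ N, nv τ a ρ y t = mvis τ a ρ y := by
  have hfin := vis_finite hT y
  refine ⟨hfin.toFinset.sup id + 1, fun t ht => ?_⟩
  have heq : (Finset.range t).filter (fun s => pos τ a ρ s = y) = hfin.toFinset := by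
    apply Finset.Subset.antisymm
    · intro s hs
      rcases Finset.mem_filter.1 hs with ⟨_, hp⟩
      simp only [Set.Finite.mem_toFinset]; exact hp
    · intro s hs
      refine Finset.mem_filter.2 ⟨Finset.mem_range.2 ?_, by simpa [Set.Finite.mem_toFinset, Vis] using hs⟩
      have hle := Finset.le_sup (f := id) hs
      simp only [id] at hle; omega
  unfold nv mvis
  rw [heq, Set.ncard_eq_toFinset_card _ hfin]

private lemma finalConf_eq_iterate {τ : V → V → V} {a : V} {ρ : V → V}
    (hT : IsTransientWalk τ ∅ a ρ) (y : V) :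
    finalConf τ ∅ a ρ y = (τ y)^[mvis τ a ρ y] (ρ y) := by
  obtain ⟨N, hN⟩ := nv_eventually hT y
  have hev : ∀ᶠ t in atTop, conf τ a ρ t y = (τ y)^[mvis τ a ρ y] (ρ y) :=
    Filter.eventually_atTop.2 ⟨N, fun t ht => by rw [conf_eq_iterate, hN t ht]⟩
  have hne : ¬ ∃ t, pos τ a ρ t ∈ (∅ : Set V) := by simp
  have hex : ∃ w, ∀ᶠ t in atTop, conf τ a ρ t y = w := ⟨_, hev⟩
  unfold finalConf
  rw [if_neg hne]
  classical
  show (if h : ∃ w, ∀ᶠ t in atTop, conf τ a ρ t y = w then h.choose else ρ y) = _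
  rw [dif_pos hex]
  obtain ⟨t, h1, h2⟩ := (hex.choose_spec.and hev).exists
  exact h1.symm.trans h2

private def Eset (τ : V → V → V) (a : V) (ρ : V → V) (y x : V) : Set ℕ :=
  {t | pos τ a ρ t = y ∧ pos τ a ρ (t + 1) = x}

private lemma eset_finite {τ : V → V → V} {a : V} {ρ : V → V}
    (hT : IsTransientWalk τ ∅ a ρ) (y x : V) : (Eset τ a ρ y x).Finite :=
  (vis_finite hT y).subset (fun _ ht => ht.1)

private lemma edge_count_lower {τ : V → V → V} {a : V} {ρ : V → V}
    (hT : IsTransientWalk τ ∅ a ρ) (y x : V) :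
    ((Finset.Icc 1 (mvis τ a ρ y)).filter (fun j => (τ y)^[j] (ρ y) = x)).card ≤
      (Eset τ a ρ y x).ncard := by
  classical
  have hEfin := eset_finite hT y x
  rw [Set.ncard_eq_toFinset_card _ hEfin]
  set f : ℕ → ℕ := fun j =>
    if h : ∃ t, pos τ a ρ t = y ∧ nv τ a ρ y t = j - 1 then h.choose else 0 with hf
  have hkey : ∀ j ∈ (Finset.Icc 1 (mvis τ a ρ y)).filter (fun j => (τ y)^[j] (ρ y) = x),
      pos τ a ρ (f j) = y ∧ nv τ a ρ y (f j) = j - 1 ∧ pos τ a ρ (f j + 1) = x := by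
    intro j hj
    rcases Finset.mem_filter.1 hj with ⟨hjI, hjx⟩
    rcases Finset.mem_Icc.1 hjI with ⟨hj1, hjm⟩
    have hex : ∃ t, pos τ a ρ t = y ∧ nv τ a ρ y t = j - 1 :=
      nv_surj hT (show j - 1 < mvis τ a ρ y by omega)
    have hfj : f j = hex.choose := by rw [hf]; exact dif_pos hex
    obtain ⟨h1, h2⟩ := hex.choose_spec
    rw [hfj]
    refine ⟨h1, h2, ?_⟩
    rw [pos_succ, h1, conf_eq_iterate, h2]
    rw [← Function.iterate_succ_apply' (τ y)]
    have hj' : j - 1 + 1 = j := by omega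
    rw [Nat.succ_eq_add_one, hj']; exact hjx
  apply Finset.card_le_card_of_injOn f
  · intro j hj
    obtain ⟨h1, _, h3⟩ := hkey j hj
    simp only [Finset.mem_coe, Set.Finite.mem_toFinset]
    exact ⟨h1, h3⟩
  · intro j hj j' hj' hEq
    obtain ⟨_, h2, _⟩ := hkey j hj
    obtain ⟨_, h2', _⟩ := hkey j' hj'
    have hj1 : 1 ≤ j := (Finset.mem_Icc.1 (Finset.mem_filter.1 hj).1).1
    have hj'1 : 1 ≤ j' := (Finset.mem_Icc.1 (Finset.mem_filter.1 hj').1).1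
    rw [hEq] at h2
    omega

private lemma visits_lower {τ : V → V → V} {a : V} {ρ : V → V}
    (hT : IsTransientWalk τ ∅ a ρ) (x : V) (s : Finset V) :
    (if x = a then 1 else 0) + ∑ y ∈ s, (Eset τ a ρ y x).ncard ≤ mvis τ a ρ x := by
  classical
  have hfin := vis_finite hT x
  set A := hfin.toFinset with hA
  have hEfin : ∀ y, (Eset τ a ρ y x).Finite := fun y => eset_finite hT y x
  set F : V → Finset ℕ := fun y => A.filter (fun t => t ≠ 0 ∧ pos τ a ρ (t - 1) = y) with hF
  have hcard : ∀ y, (Eset τ a ρ y x).ncard ≤ (F y).card := by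
    intro y
    rw [Set.ncard_eq_toFinset_card _ (hEfin y)]
    apply Finset.card_le_card_of_injOn (fun t => t + 1)
    · intro t ht
      simp only [Finset.mem_coe, Set.Finite.mem_toFinset, Eset, Set.mem_setOf_eq] at ht
      refine Finset.mem_filter.2 ⟨?_, ?_, ?_⟩
      · rw [hA, Set.Finite.mem_toFinset]
        show pos τ a ρ (t + 1) = x
        exact ht.2
      · dsimp only
        omega
      · simpa using ht.1
    · intro t _ t' _ h
      simpa using h
  have hdisj : ∀ y ∈ s, ∀ y' ∈ s, y ≠ y' → Disjoint (F y) (F y') := by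
    intro y _ y' _ hne
    refine Finset.disjoint_left.2 (fun t ht ht' => ?_)
    rcases Finset.mem_filter.1 ht with ⟨_, _, h1⟩
    rcases Finset.mem_filter.1 ht' with ⟨_, _, h2⟩
    exact hne (h1.symm.trans h2)
  have hBsub : s.biUnion F ⊆ A.filter (fun t => t ≠ 0) := by
    intro t ht
    rcases Finset.mem_biUnion.1 ht with ⟨y, _, htF⟩
    rcases Finset.mem_filter.1 htF with ⟨htA, h0, _⟩
    exact Finset.mem_filter.2 ⟨htA, h0⟩
  have hsumB : ∑ y ∈ s, (Eset τ a ρ y x).ncard ≤ (A.filter (fun t => t ≠ 0)).card := by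
    calc ∑ y ∈ s, (Eset τ a ρ y x).ncard ≤ ∑ y ∈ s, (F y).card :=
          Finset.sum_le_sum fun y _ => hcard y
      _ = (s.biUnion F).card := (Finset.card_biUnion hdisj).symm
      _ ≤ _ := Finset.card_le_card hBsub
  have hmv : mvis τ a ρ x = A.card := Set.ncard_eq_toFinset_card _ hfin
  by_cases hx : x = a
  · have h0A : (0 : ℕ) ∈ A := by
      rw [hA, Set.Finite.mem_toFinset]
      show pos τ a ρ 0 = x
      exact hx.symm
    have hins : insert 0 (A.filter (fun t => t ≠ 0)) ⊆ A := by
      intro t ht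
      rcases Finset.mem_insert.1 ht with rfl | ht
      · exact h0A
      · exact (Finset.mem_filter.1 ht).1
    have hc := Finset.card_le_card hins
    rw [Finset.card_insert_of_notMem (by simp)] at hc
    rw [if_pos hx]
    omega
  · rw [if_neg hx]
    have hsub2 : A.filter (fun t => t ≠ 0) ⊆ A := Finset.filter_subset _ _
    have := Finset.card_le_card hsub2
    omega

private lemma cycle_count_lower {σ : V → V} {v x : V} {d j0 : ℕ}
    (hj1 : 1 ≤ j0) (hjd : j0 ≤ d)
    (hx : ∀ k : ℕ, σ^[j0 + k * d] v = x) (M : ℕ) :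
    M ≤ d * ((Finset.Icc 1 M).filter (fun j => σ^[j] v = x)).card + d := by
  classical
  set c := ((Finset.Icc 1 M).filter (fun j => σ^[j] v = x)).card with hc
  by_cases hM : M < j0
  · have : d * c + d ≥ d := by omega
    omega
  push_neg at hM
  set q := (M - j0) / d with hq
  have hd : 1 ≤ d := le_trans hj1 hjd
  have hdm := Nat.div_add_mod (M - j0) d
  have hrd : (M - j0) % d < d := Nat.mod_lt _ (by omega)
  have hsub : (Finset.range (q + 1)).image (fun k => j0 + k * d) ⊆
      (Finset.Icc 1 M).filter (fun j => σ^[j] v = x) := by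
    intro j hj
    rcases Finset.mem_image.1 hj with ⟨k, hk, rfl⟩
    have hk' : k ≤ q := Nat.lt_succ_iff.1 (Finset.mem_range.1 hk)
    refine Finset.mem_filter.2 ⟨Finset.mem_Icc.2 ⟨by omega, ?_⟩, hx k⟩
    have h1 : k * d ≤ q * d := Nat.mul_le_mul_right d hk'
    have h2 : q * d = d * q := Nat.mul_comm q d
    have h3 : d * q = d * ((M - j0) / d) := by rw [hq]
    omega
  have hinj : Set.InjOn (fun k => j0 + k * d) (Finset.range (q + 1)) := by
    intro k _ k' _ h
    simp only at h
    have : k * d = k' * d := by omega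
    exact Nat.eq_of_mul_eq_mul_right (by omega) this
  have hcardle := Finset.card_le_card hsub
  rw [Finset.card_image_of_injOn hinj, Finset.card_range, ← hc] at hcardle
  have h1 : d * (q + 1) ≤ d * c := Nat.mul_le_mul_left d hcardle
  rw [Nat.mul_succ] at h1
  have h3 : d * q = d * ((M - j0) / d) := by rw [hq]
  omega

private lemma exists_orbit_index {G : SimpleGraph V} [G.LocallyFinite]
    {τ : V → V → V} (hτ : ValidMechanism G ∅ τ) {y x v : V}
    (hx : G.Adj y x) (hv : G.Adj y v) :
    ∃ j0, 1 ≤ j0 ∧ j0 ≤ G.degree y ∧ ∀ k : ℕ, (τ y)^[j0 + k * G.degree y] v = x := by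
  classical
  obtain ⟨hmap, horb⟩ := hτ y (Set.notMem_empty y)
  set f := τ y with hfdef
  have hiter : ∀ z, G.Adj y z → ∀ j, G.Adj y (f^[j] z) := by
    intro z hz j
    induction j with
    | zero => simpa
    | succ j ih => rw [Function.iterate_succ_apply']; exact hmap _ ih
  obtain ⟨i, hi⟩ := horb (f v) (hmap v hv) v hv
  have hpp : Function.IsPeriodicPt f (i + 1) v := by
    show f^[i + 1] v = v
    rw [Function.iterate_succ_apply]; exact hi
  have hmpos : 0 < Function.minimalPeriod f v := hpp.minimalPeriod_pos (Nat.succ_pos i)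
  set m := Function.minimalPeriod f v with hm
  have hminj : Set.InjOn (fun j => f^[j] v) (Finset.range m : Set ℕ) := by
    intro j hj j' hj' h
    exact Function.iterate_injOn_Iio_minimalPeriod (by simpa using hj) (by simpa using hj') h
  have hO : (Finset.range m).image (fun j => f^[j] v) = G.neighborFinset y := by
    apply Finset.Subset.antisymm
    · intro z hz
      rcases Finset.mem_image.1 hz with ⟨j, _, rfl⟩
      exact (SimpleGraph.mem_neighborFinset G y _).2 (hiter v hv j)
    · intro z hz
      obtain ⟨i', hi'⟩ := horb v hv z ((SimpleGraph.mem_neighborFinset G y z).1 hz)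
      refine Finset.mem_image.2 ⟨i' % m, Finset.mem_range.2 (Nat.mod_lt _ hmpos), ?_⟩
      show f^[i' % m] v = z
      rw [hm, Function.iterate_mod_minimalPeriod_eq]
      exact hi'
  have hcardeq : m = G.degree y := by
    have h1 : ((Finset.range m).image (fun j => f^[j] v)).card = m := by
      rw [Finset.card_image_of_injOn hminj, Finset.card_range]
    rw [hO] at h1
    rw [← h1, SimpleGraph.card_neighborFinset_eq_degree]
  have hfix : f^[m] v = v := Function.iterate_minimalPeriod
  have hmul : ∀ k, f^[k * m] v = v := by
    intro k
    induction k with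
    | zero => simp
    | succ k ih => rw [Nat.succ_mul, Function.iterate_add_apply, hfix, ih]
  obtain ⟨i0, hi0⟩ := horb v hv x hx
  have hdecomp : f^[i0 % m] v = x := by
    conv_rhs => rw [← hi0, ← Nat.mod_add_div' i0 m]
    rw [Function.iterate_add_apply, hmul]
  by_cases h0 : i0 % m = 0
  · have hxv : x = v := by rw [← hdecomp, h0]; rfl
    refine ⟨m, hmpos, le_of_eq hcardeq, fun k => ?_⟩
    rw [← hcardeq, Function.iterate_add_apply, hmul, hfix, ← hxv]
  · refine ⟨i0 % m, by omega,
      le_trans (le_of_lt (Nat.mod_lt _ hmpos)) (le_of_eq hcardeq), fun k => ?_⟩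
    rw [← hcardeq, Function.iterate_add_apply, hmul]
    exact hdecomp

private noncomputable def Mtot (τ : V → V → V) (a : V) (ρ : V → V) (n : ℕ) (y : V) : ℕ :=
  ∑ i ∈ Finset.range n, mvis τ a ((finalConf τ ∅ a)^[i] ρ) y

private lemma iterate_finalConf_apply {τ : V → V → V} {a : V} {ρ : V → V}
    (T : ∀ i, IsTransientWalk τ ∅ a ((finalConf τ ∅ a)^[i] ρ)) (y : V) :
    ∀ i, (finalConf τ ∅ a)^[i] ρ y = (τ y)^[Mtot τ a ρ i y] (ρ y) := by
  intro i
  induction i with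
  | zero => simp [Mtot]
  | succ i ih =>
    rw [Function.iterate_succ_apply', finalConf_eq_iterate (T i) y, ih,
      ← Function.iterate_add_apply]
    congr 1
    unfold Mtot
    rw [Finset.sum_range_succ]
    omega

private lemma Svis_eq_Mtot {τ : V → V → V} {a : V} {ρ : V → V}
    (T : ∀ i, IsTransientWalk τ ∅ a ((finalConf τ ∅ a)^[i] ρ)) (n : ℕ) (x : V) :
    Svis τ ∅ a ρ n x = (Mtot τ a ρ n x : ℕ∞) := by
  unfold Svis Mtot
  rw [Nat.cast_sum]
  refine Finset.sum_congr rfl (fun i _ => ?_)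
  unfold odometer
  rw [odometer_set_eq, (vis_finite (T i) x).encard_eq_coe_toFinset_card]
  unfold mvis
  rw [Set.ncard_eq_toFinset_card _ (vis_finite (T i) x)]

private lemma cn_le_sum_ncard {τ : V → V → V} {a : V} {ρ : V → V}
    (T : ∀ i, IsTransientWalk τ ∅ a ((finalConf τ ∅ a)^[i] ρ)) (n : ℕ) (y x : V) :
    ((Finset.Icc 1 (Mtot τ a ρ n y)).filter (fun j => (τ y)^[j] (ρ y) = x)).card ≤
      ∑ i ∈ Finset.range n, (Eset τ a ((finalConf τ ∅ a)^[i] ρ) y x).ncard := by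
  classical
  induction n with
  | zero => simp [Mtot]
  | succ n ih =>
    rw [Finset.sum_range_succ]
    have hM : Mtot τ a ρ (n + 1) y =
        Mtot τ a ρ n y + mvis τ a ((finalConf τ ∅ a)^[n] ρ) y := Finset.sum_range_succ _ _
    set A := Mtot τ a ρ n y with hAdef
    set m := mvis τ a ((finalConf τ ∅ a)^[n] ρ) y with hmdef
    have hsplit : (Finset.Icc 1 (A + m)).filter (fun j => (τ y)^[j] (ρ y) = x) =
        ((Finset.Icc 1 A).filter (fun j => (τ y)^[j] (ρ y) = x)) ∪
        ((Finset.Icc (A + 1) (A + m)).filter (fun j => (τ y)^[j] (ρ y) = x)) := by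
      rw [← Finset.filter_union]
      congr 1
      ext j
      simp only [Finset.mem_union, Finset.mem_Icc]
      omega
    have hdisj : Disjoint ((Finset.Icc 1 A).filter (fun j => (τ y)^[j] (ρ y) = x))
        ((Finset.Icc (A + 1) (A + m)).filter (fun j => (τ y)^[j] (ρ y) = x)) := by
      refine Finset.disjoint_left.2 (fun j hj hj' => ?_)
      have h1 := (Finset.mem_Icc.1 (Finset.mem_filter.1 hj).1).2
      have h2 := (Finset.mem_Icc.1 (Finset.mem_filter.1 hj').1).1
      omega
    rw [hM, hsplit, Finset.card_union_of_disjoint hdisj]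
    have hshift : ((Finset.Icc (A + 1) (A + m)).filter (fun j => (τ y)^[j] (ρ y) = x)).card =
        ((Finset.Icc 1 m).filter
          (fun j => (τ y)^[j] ((finalConf τ ∅ a)^[n] ρ y) = x)).card := by
      rw [iterate_finalConf_apply T y n, ← hAdef]
      apply Finset.card_nbij' (fun j => j - A) (fun j => j + A)
      · intro j hj
        dsimp only
        rcases Finset.mem_filter.1 hj with ⟨hjI, hjx⟩
        rcases Finset.mem_Icc.1 hjI with ⟨hj1, hj2⟩
        refine Finset.mem_filter.2 ⟨Finset.mem_Icc.2 ⟨by omega, by omega⟩, ?_⟩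
        rw [← Function.iterate_add_apply]
        have : j - A + A = j := by omega
        rw [this]; exact hjx
      · intro j hj
        dsimp only
        rcases Finset.mem_filter.1 hj with ⟨hjI, hjx⟩
        rcases Finset.mem_Icc.1 hjI with ⟨hj1, hj2⟩
        refine Finset.mem_filter.2 ⟨Finset.mem_Icc.2 ⟨by omega, by omega⟩, ?_⟩
        rw [← Function.iterate_add_apply] at hjx
        exact hjx
      · intro j hj
        have := (Finset.mem_Icc.1 (Finset.mem_filter.1 hj).1).1
        dsimp only
        omega
      · intro j _
        dsimp only
        omega
    rw [hshift]
    have hlast := edge_count_lower (T n) y x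
    rw [← hmdef] at hlast
    omega

private lemma srw_succ (G : SimpleGraph V) [G.LocallyFinite] (a : V) (t : ℕ) (x : V) :
    srw G (∅ : Set V) a (t + 1) x =
      ∑ y ∈ G.neighborFinset x, srw G ∅ a t y / (G.degree y : ℝ≥0∞) := by
  show (∑' y : V, Set.indicator {y | G.Adj y x ∧ y ∉ (∅ : Set V)}
      (fun z => srw G ∅ a t z / (G.degree z : ℝ≥0∞)) y) = _
  rw [tsum_eq_sum (s := G.neighborFinset x)
    (fun y hy => Set.indicator_of_notMem
      (fun hmem => hy ((SimpleGraph.mem_neighborFinset G x y).2 hmem.1.symm)) _)]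
  refine Finset.sum_congr rfl (fun y hy => ?_)
  exact Set.indicator_of_mem
    (show y ∈ {z | G.Adj z x ∧ z ∉ (∅ : Set V)} from
      ⟨((SimpleGraph.mem_neighborFinset G x y).1 hy).symm, Set.notMem_empty y⟩)
    (fun z => srw G ∅ a t z / (G.degree z : ℝ≥0∞))

private lemma green_eq (G : SimpleGraph V) [G.LocallyFinite] (a x : V) :
    green G (∅ : Set V) a x = ⨆ T : ℕ, ∑ t ∈ Finset.range T, srw G ∅ a t x := by
  unfold green
  rw [show ((∅ : Set V)ᶜ) = Set.univ by simp, Set.indicator_univ]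
  exact ENNReal.tsum_eq_iSup_nat

private lemma sum_div' (s : Finset V) (f : V → ℝ≥0∞) (c : ℝ≥0∞) :
    (∑ y ∈ s, f y) / c = ∑ y ∈ s, f y / c := by
  simp only [div_eq_mul_inv, Finset.sum_mul]

private lemma div_div_swap (A B C : ℝ≥0∞) : A / B / C = A / C / B := by
  simp only [div_eq_mul_inv, mul_right_comm]

private lemma gsum_succ (G : SimpleGraph V) [G.LocallyFinite] (a : V) (T : ℕ) (x : V) :
    ∑ t ∈ Finset.range (T + 1), srw G ∅ a t x =
      (if x = a then (1 : ℝ≥0∞) else 0) +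
        ∑ y ∈ G.neighborFinset x,
          (∑ t ∈ Finset.range T, srw G ∅ a t y) / (G.degree y : ℝ≥0∞) := by
  rw [Finset.sum_range_succ']
  have h0 : srw G (∅ : Set V) a 0 x = (if x = a then (1 : ℝ≥0∞) else 0) := by
    show Set.indicator {a} 1 x = _
    by_cases hx : x = a <;> simp [hx]
  rw [h0, add_comm]
  congr 1
  calc ∑ t ∈ Finset.range T, srw G ∅ a (t + 1) x
      = ∑ t ∈ Finset.range T, ∑ y ∈ G.neighborFinset x,
          srw G ∅ a t y / (G.degree y : ℝ≥0∞) :=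
        Finset.sum_congr rfl (fun t _ => srw_succ G a t x)
    _ = ∑ y ∈ G.neighborFinset x, ∑ t ∈ Finset.range T,
          srw G ∅ a t y / (G.degree y : ℝ≥0∞) := Finset.sum_comm
    _ = _ := Finset.sum_congr rfl (fun y _ => (sum_div' _ _ _).symm)

private lemma le_liminf_of_le_add_div {g C : ℝ≥0∞} (hC : C ≠ ⊤) {u : ℕ → ℝ≥0∞}
    (h : ∀ i : ℕ, 1 ≤ i → g ≤ u i + C / i) : g ≤ Filter.liminf u Filter.atTop := by
  refine ENNReal.le_of_forall_pos_le_add fun ε hε _ => ?_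
  obtain ⟨n, hn⟩ := ENNReal.exists_nat_gt (show C / (ε : ℝ≥0∞) ≠ ⊤ from
    (ENNReal.div_lt_top hC (by exact_mod_cast hε.ne')).ne)
  have hCε : C ≤ (ε : ℝ≥0∞) * n := by
    rcases le_or_gt C ((ε : ℝ≥0∞) * n) with h' | h'
    · exact h'
    · exfalso
      have : (n : ℝ≥0∞) ≤ C / (ε : ℝ≥0∞) := by
        rw [ENNReal.le_div_iff_mul_le (Or.inl (by exact_mod_cast hε.ne')) (Or.inl ENNReal.coe_ne_top)]
        rw [mul_comm]
        exact h'.le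
      exact (not_le.2 hn) this
  have hev : ∀ᶠ i in Filter.atTop, g - (ε : ℝ≥0∞) ≤ u i := by
    refine Filter.eventually_atTop.2 ⟨max n 1, fun i hi => ?_⟩
    have hi1 : 1 ≤ i := le_trans (le_max_right n 1) hi
    have hin : (n : ℝ≥0∞) ≤ (i : ℝ≥0∞) := by
      exact_mod_cast le_trans (le_max_left n 1) hi
    have hdiv : C / (i : ℝ≥0∞) ≤ (ε : ℝ≥0∞) := by
      rw [ENNReal.div_le_iff_le_mul (Or.inl (by exact_mod_cast (by omega : i ≠ 0)))
        (Or.inl (ENNReal.natCast_ne_top i))]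
      exact le_trans hCε (mul_le_mul_right hin _)
    have : g ≤ u i + (ε : ℝ≥0∞) :=
      le_trans (h i hi1) (add_le_add_right hdiv _)
    exact tsub_le_iff_right.2 this
  have hliminf : g - (ε : ℝ≥0∞) ≤ Filter.liminf u Filter.atTop :=
    Filter.le_liminf_of_le (by isBoundedDefault) hev
  exact tsub_le_iff_right.1 hliminf

end Aux

/-- Schramm's bound: on a locally finite simple connected graph, for every
initial rotor configuration `ρ` and every vertex `x`,
`liminf_n S_n(ρ,x)/n ≥ G(a,x)` (Green function, `+∞` if the graph is recurrent). -/
theorem green_le_liminf_occupation_rate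
    {V : Type*} [DecidableEq V]
    (G : SimpleGraph V) [G.LocallyFinite] (hconn : G.Connected)
    (τ : V → V → V) (hτ : ValidMechanism G ∅ τ) (a : V)
    (ρ : V → V) (hρ : ValidConfig G ∅ ρ) (x : V) :
    green G ∅ a x ≤
      Filter.liminf (fun n : ℕ => (SvisT τ a ρ n x : ℝ≥0∞) / (n : ℝ≥0∞)) atTop := by
  classical
  by_cases hTall : ∀ i : ℕ, IsTransientWalk τ ∅ a ((finalConf τ ∅ a)^[i] ρ)
  · -- all walks transient
    have hueq : (fun n : ℕ => (SvisT τ a ρ n x : ℝ≥0∞) / (n : ℝ≥0∞)) =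
        fun n : ℕ => (Mtot τ a ρ n x : ℝ≥0∞) / (n : ℝ≥0∞) := by
      funext n
      unfold SvisT
      rw [if_pos (fun i _ => hTall i), Svis_eq_Mtot hTall]
      simp [ENat.toENNReal_coe]
    rw [hueq]
    have hKEY : ∀ (x' : V) (n : ℕ),
        (n : ℝ≥0∞) * (if x' = a then (1:ℝ≥0∞) else 0) +
          ∑ y ∈ G.neighborFinset x', (Mtot τ a ρ n y : ℝ≥0∞) / (G.degree y : ℝ≥0∞)
        ≤ (Mtot τ a ρ n x' : ℝ≥0∞) + (G.degree x' : ℝ≥0∞) := by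
      intro x' n
      have hA : n * (if x' = a then 1 else 0) +
          ∑ y ∈ G.neighborFinset x',
            ((Finset.Icc 1 (Mtot τ a ρ n y)).filter (fun j => (τ y)^[j] (ρ y) = x')).card
          ≤ Mtot τ a ρ n x' := by
        have hper : ∀ i ∈ Finset.range n,
            (if x' = a then 1 else 0) + ∑ y ∈ G.neighborFinset x',
              (Eset τ a ((finalConf τ ∅ a)^[i] ρ) y x').ncard
            ≤ mvis τ a ((finalConf τ ∅ a)^[i] ρ) x' :=
          fun i _ => visits_lower (hTall i) x' _
        have hsum := Finset.sum_le_sum hper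
        rw [Finset.sum_add_distrib, Finset.sum_const, Finset.card_range, smul_eq_mul,
          Finset.sum_comm] at hsum
        exact le_trans (add_le_add_right (Finset.sum_le_sum
          (fun y _ => cn_le_sum_ncard hTall n y x')) _) hsum
      have hB : ∀ y ∈ G.neighborFinset x',
          (Mtot τ a ρ n y : ℝ≥0∞) / (G.degree y : ℝ≥0∞) ≤
            (((Finset.Icc 1 (Mtot τ a ρ n y)).filter
              (fun j => (τ y)^[j] (ρ y) = x')).card : ℝ≥0∞) + 1 := by
        intro y hy
        have hAdjyx : G.Adj y x' := ((SimpleGraph.mem_neighborFinset G x' y).1 hy).symm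
        obtain ⟨j0, hj01, hj0d, hj0x⟩ :=
          exists_orbit_index hτ hAdjyx (hρ y (Set.notMem_empty y))
        have hcyc := cycle_count_lower hj01 hj0d hj0x (Mtot τ a ρ n y)
        have hdpos : 0 < G.degree y := by
          rw [← SimpleGraph.card_neighborFinset_eq_degree]
          exact Finset.card_pos.2 ⟨x', (SimpleGraph.mem_neighborFinset G y x').2 hAdjyx⟩
        rw [ENNReal.div_le_iff_le_mul (Or.inl (by exact_mod_cast hdpos.ne'))
          (Or.inl (ENNReal.natCast_ne_top _))]
        have hfin : Mtot τ a ρ n y ≤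
            (((Finset.Icc 1 (Mtot τ a ρ n y)).filter
              (fun j => (τ y)^[j] (ρ y) = x')).card + 1) * G.degree y := by
          rw [add_mul, one_mul, mul_comm]
          exact hcyc
        exact_mod_cast hfin
      calc (n : ℝ≥0∞) * (if x' = a then (1:ℝ≥0∞) else 0) +
            ∑ y ∈ G.neighborFinset x', (Mtot τ a ρ n y : ℝ≥0∞) / (G.degree y : ℝ≥0∞)
          ≤ (n : ℝ≥0∞) * (if x' = a then (1:ℝ≥0∞) else 0) +
            ∑ y ∈ G.neighborFinset x',
              ((((Finset.Icc 1 (Mtot τ a ρ n y)).filter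
                (fun j => (τ y)^[j] (ρ y) = x')).card : ℝ≥0∞) + 1) :=
            add_le_add_right (Finset.sum_le_sum hB) _
        _ = ((n : ℝ≥0∞) * (if x' = a then (1:ℝ≥0∞) else 0) +
              ∑ y ∈ G.neighborFinset x',
                (((Finset.Icc 1 (Mtot τ a ρ n y)).filter
                  (fun j => (τ y)^[j] (ρ y) = x')).card : ℝ≥0∞)) +
              (G.degree x' : ℝ≥0∞) := by
            rw [Finset.sum_add_distrib, Finset.sum_const, nsmul_eq_mul, mul_one,
              SimpleGraph.card_neighborFinset_eq_degree, add_assoc]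
        _ ≤ (Mtot τ a ρ n x' : ℝ≥0∞) + (G.degree x' : ℝ≥0∞) := by
            refine add_le_add_left ?_ _
            by_cases hxa : x' = a
            · simp only [if_pos hxa, mul_one]
              simp only [if_pos hxa, Nat.mul_one] at hA
              exact_mod_cast hA
            · simp only [if_neg hxa, mul_zero, zero_add]
              simp only [if_neg hxa, Nat.mul_zero, Nat.zero_add] at hA
              exact_mod_cast hA
    have hKEYdiv : ∀ (x' : V) (n : ℕ), 1 ≤ n →
        (if x' = a then (1:ℝ≥0∞) else 0) +
          ∑ y ∈ G.neighborFinset x',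
            ((Mtot τ a ρ n y : ℝ≥0∞) / (n : ℝ≥0∞)) / (G.degree y : ℝ≥0∞)
        ≤ (Mtot τ a ρ n x' : ℝ≥0∞) / (n : ℝ≥0∞) + (G.degree x' : ℝ≥0∞) / (n : ℝ≥0∞) := by
      intro x' n hn
      have h := ENNReal.div_le_div_right (hKEY x' n) (n : ℝ≥0∞)
      rw [ENNReal.add_div, ENNReal.add_div] at h
      have h1 : ((n : ℝ≥0∞) * (if x' = a then (1:ℝ≥0∞) else 0)) / (n : ℝ≥0∞) =
          (if x' = a then (1:ℝ≥0∞) else 0) := by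
        rw [mul_comm, mul_div_assoc,
          ENNReal.div_self (by exact_mod_cast (by omega : n ≠ 0)) (ENNReal.natCast_ne_top n),
          mul_one]
      have h2 : (∑ y ∈ G.neighborFinset x',
          (Mtot τ a ρ n y : ℝ≥0∞) / (G.degree y : ℝ≥0∞)) / (n : ℝ≥0∞) =
          ∑ y ∈ G.neighborFinset x',
            ((Mtot τ a ρ n y : ℝ≥0∞) / (n : ℝ≥0∞)) / (G.degree y : ℝ≥0∞) := by
        rw [sum_div']
        exact Finset.sum_congr rfl (fun y _ => div_div_swap _ _ _)
      rw [h1, h2] at h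
      exact h
    have hIND : ∀ T : ℕ, ∀ x' : V, ∃ C : ℝ≥0∞, C ≠ ⊤ ∧ ∀ n : ℕ, 1 ≤ n →
        (∑ t ∈ Finset.range T, srw G ∅ a t x') ≤
          (Mtot τ a ρ n x' : ℝ≥0∞) / (n : ℝ≥0∞) + C / (n : ℝ≥0∞) := by
      intro T
      induction T with
      | zero => exact fun x' => ⟨0, by simp, fun n hn => by simp⟩
      | succ T ih =>
        intro x'
        choose Cf hCf hCle using ih
        have hdne : ∀ y ∈ G.neighborFinset x', (G.degree y : ℝ≥0∞) ≠ 0 := by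
          intro y hy
          have hAdjyx : G.Adj y x' := ((SimpleGraph.mem_neighborFinset G x' y).1 hy).symm
          have hdpos : 0 < G.degree y := by
            rw [← SimpleGraph.card_neighborFinset_eq_degree]
            exact Finset.card_pos.2 ⟨x', (SimpleGraph.mem_neighborFinset G y x').2 hAdjyx⟩
          exact_mod_cast hdpos.ne'
        refine ⟨(G.degree x' : ℝ≥0∞) +
          ∑ y ∈ G.neighborFinset x', Cf y / (G.degree y : ℝ≥0∞), ?_, ?_⟩
        · refine ENNReal.add_ne_top.2 ⟨ENNReal.natCast_ne_top _, ?_⟩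
          refine (ENNReal.sum_lt_top.2 (fun y hy => ?_)).ne
          exact ENNReal.div_lt_top (hCf y) (hdne y hy)
        · intro n hn
          rw [gsum_succ]
          have hstep1 : ∀ y ∈ G.neighborFinset x',
              (∑ t ∈ Finset.range T, srw G ∅ a t y) / (G.degree y : ℝ≥0∞) ≤
                ((Mtot τ a ρ n y : ℝ≥0∞) / (n : ℝ≥0∞)) / (G.degree y : ℝ≥0∞) +
                  (Cf y / (G.degree y : ℝ≥0∞)) / (n : ℝ≥0∞) := by
            intro y hy
            calc (∑ t ∈ Finset.range T, srw G ∅ a t y) / (G.degree y : ℝ≥0∞)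
                ≤ ((Mtot τ a ρ n y : ℝ≥0∞) / (n : ℝ≥0∞) + Cf y / (n : ℝ≥0∞)) /
                    (G.degree y : ℝ≥0∞) := ENNReal.div_le_div_right (hCle y n hn) _
              _ = _ := by
                  rw [ENNReal.add_div]
                  congr 1
                  exact div_div_swap _ _ _
          calc (if x' = a then (1:ℝ≥0∞) else 0) + ∑ y ∈ G.neighborFinset x',
                (∑ t ∈ Finset.range T, srw G ∅ a t y) / (G.degree y : ℝ≥0∞)
              ≤ (if x' = a then (1:ℝ≥0∞) else 0) + ∑ y ∈ G.neighborFinset x',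
                (((Mtot τ a ρ n y : ℝ≥0∞) / (n : ℝ≥0∞)) / (G.degree y : ℝ≥0∞) +
                  (Cf y / (G.degree y : ℝ≥0∞)) / (n : ℝ≥0∞)) :=
                add_le_add_right (Finset.sum_le_sum hstep1) _
            _ = ((if x' = a then (1:ℝ≥0∞) else 0) + ∑ y ∈ G.neighborFinset x',
                  ((Mtot τ a ρ n y : ℝ≥0∞) / (n : ℝ≥0∞)) / (G.degree y : ℝ≥0∞)) +
                (∑ y ∈ G.neighborFinset x', Cf y / (G.degree y : ℝ≥0∞)) / (n : ℝ≥0∞) := by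
                rw [Finset.sum_add_distrib, sum_div']
                ring
            _ ≤ ((Mtot τ a ρ n x' : ℝ≥0∞) / (n : ℝ≥0∞) + (G.degree x' : ℝ≥0∞) / (n : ℝ≥0∞)) +
                (∑ y ∈ G.neighborFinset x', Cf y / (G.degree y : ℝ≥0∞)) / (n : ℝ≥0∞) :=
                add_le_add_left (hKEYdiv x' n hn) _
            _ = (Mtot τ a ρ n x' : ℝ≥0∞) / (n : ℝ≥0∞) +
                ((G.degree x' : ℝ≥0∞) +
                  ∑ y ∈ G.neighborFinset x', Cf y / (G.degree y : ℝ≥0∞)) / (n : ℝ≥0∞) := by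
                rw [ENNReal.add_div]
                ring
    rw [green_eq]
    refine iSup_le fun T => ?_
    obtain ⟨C, hC, hCle⟩ := hIND T x
    exact le_liminf_of_le_add_div hC (fun i hi => hCle i hi)
  · -- some walk fails to be transient
    push_neg at hTall
    obtain ⟨i0, hi0⟩ := hTall
    refine le_trans le_top (Filter.le_liminf_of_le (by isBoundedDefault) ?_)
    refine Filter.eventually_atTop.2 ⟨i0 + 1, fun n hn => ?_⟩
    have hcond : ¬ ∀ i < n, IsTransientWalk τ ∅ a ((finalConf τ ∅ a)^[i] ρ) :=
      fun h => hi0 (h i0 (by omega))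
    have hS : SvisT τ a ρ n x = ⊤ := by unfold SvisT; rw [if_neg hcond]
    rw [hS, ENat.toENNReal_top, div_eq_mul_inv,
      ENNReal.top_mul (ENNReal.inv_ne_zero.2 (ENNReal.natCast_ne_top n))]

end RotorWalk
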